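/- The generalized average Fisher information f of a bivariate Gaussian copula is a convex function of the correlation coefficient on (−1,1); that is, under the assumption |σX·b| ≤ σY·|a|, the function f(ρ) = (ρ²(a²σY² + b²σX²) − 2ρ·a·b·σX·σY)/(σX²σY²(1−ρ²)) is convex on the open interval (−1,1). -/

import Mathlib

open Set

lemma convexOn_inv_Ioi : ConvexOn ℝ (Set.Ioi (0:ℝ)) fun x : ℝ => x⁻¹ := by
  have h := (strictConvexOn_zpow (m := -1) (by decide) (by decide)).convexOn
  exact h.congr fun x _ => by simp [zpow_neg]

lemma convexOn_one_sub_inv : ConvexOn ℝ (Set.Ioo (-1:ℝ) 1) fun ρ : ℝ => (1 - ρ)⁻¹ := by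
  let g : ℝ →ᵃ[ℝ] ℝ := AffineMap.mk' (fun ρ => 1 - ρ) (-LinearMap.id) 0
    (by intro x; simp; ring)
  have h := convexOn_inv_Ioi.comp_affineMap g
  refine (h.subset ?_ (convex_Ioo _ _)).congr fun x _ => rfl
  intro x hx
  simp only [mem_preimage, mem_Ioi, g, AffineMap.coe_mk', mem_Ioo] at *
  linarith [hx.2]

lemma convexOn_one_add_inv : ConvexOn ℝ (Set.Ioo (-1:ℝ) 1) fun ρ : ℝ => (1 + ρ)⁻¹ := by
  let g : ℝ →ᵃ[ℝ] ℝ := AffineMap.mk' (fun ρ => 1 + ρ) LinearMap.id 0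
    (by intro x; simp; ring)
  have h := convexOn_inv_Ioi.comp_affineMap g
  refine (h.subset ?_ (convex_Ioo _ _)).congr fun x _ => rfl
  intro x hx
  simp only [mem_preimage, mem_Ioi, g, AffineMap.coe_mk', mem_Ioo] at *
  linarith [hx.1]

/-- The generalized average Fisher information (GAFI) of a bivariate
Gaussian copula, `f ρ = (ρ²(a²σY² + b²σX²) − 2ρ·a·b·σX·σY)/(σX²σY²(1−ρ²))`,
is convex on the open interval (−1, 1), under the assumption `|σX·b| ≤ σY·|a|`. -/
theorem gafi_convexOn (σX σY a b : ℝ) (hσX : 0 < σX) (hσY : 0 < σY) (ha : a ≠ 0)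
    (hab : |σX * b| ≤ σY * |a|) (f : ℝ → ℝ)
    (hf : ∀ ρ : ℝ, f ρ =
      (ρ ^ 2 * (a ^ 2 * σY ^ 2 + b ^ 2 * σX ^ 2) - 2 * ρ * a * b * σX * σY) /
        (σX ^ 2 * σY ^ 2 * (1 - ρ ^ 2))) :
    ConvexOn ℝ (Set.Ioo (-1 : ℝ) 1) f := by
  set K : ℝ := σX ^ 2 * σY ^ 2 with hK
  have hKpos : 0 < K := by positivity
  set α : ℝ := (a * σY - b * σX) ^ 2 / (2 * K) with hα
  set β : ℝ := (a * σY + b * σX) ^ 2 / (2 * K) with hβ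
  set γ : ℝ := (a ^ 2 * σY ^ 2 + b ^ 2 * σX ^ 2) / K with hγ
  have hαnn : 0 ≤ α := by positivity
  have hβnn : 0 ≤ β := by positivity
  have hg : ConvexOn ℝ (Set.Ioo (-1:ℝ) 1)
      (fun ρ => (α * (1 - ρ)⁻¹ + β * (1 + ρ)⁻¹) + (-γ)) := by
    exact ((convexOn_one_sub_inv.smul hαnn).add (convexOn_one_add_inv.smul hβnn)).add_const _
  refine hg.congr fun ρ hρ => ?_
  have h1 : (1 : ℝ) - ρ ≠ 0 := by
    have := hρ.2; intro h; simp only [mem_Ioo] at hρ; linarith [sub_eq_zero.mp h]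
  have h2 : (1 : ℝ) + ρ ≠ 0 := by
    simp only [mem_Ioo] at hρ; intro h; nlinarith [hρ.1]
  rw [hf ρ]
  have hKne : K ≠ 0 := ne_of_gt hKpos
  have h12 : (1 : ℝ) - ρ ^ 2 ≠ 0 := by
    intro h
    rcases mul_eq_zero.mp (show (1 - ρ) * (1 + ρ) = 0 by nlinarith) with h' | h'
    · exact h1 h'
    · exact h2 h'
  rw [hα, hβ, hγ]
  field_simp
  ring
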